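/- arXiv:1604.05553 — 2 statements merged into one kernel-verified Lean document; each statement's English description precedes it below -/
import Mathlib

section
/- Conversely, if x_0 ∈ ℓ∞(ℤ) satisfies ‖(1/n) Σ_{j=1}^n S^j x_0 − z‖ = O(1/n) as n → ∞ for some constant sequence z, then x_0 − z lies in the range of S − I. -/
open BoundedContinuousFunction

/-- The right-shift operator `(S x)ₖ = x_{k-1}` on `ℓ∞(ℤ) = ℤ →ᵇ ℂ`. -/
noncomputable def shiftR : (ℤ →ᵇ ℂ) →L[ℂ] (ℤ →ᵇ ℂ) :=
  LinearMap.mkContinuous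
    { toFun := fun f => f.compContinuous ⟨fun k => k - 1, continuous_of_discreteTopology⟩
      map_add' := fun f g => by ext x; simp
      map_smul' := fun c f => by ext x; simp }
    1 (fun f => by simpa using f.norm_compContinuous_le _)

lemma shiftR_apply (f : ℤ →ᵇ ℂ) (k : ℤ) : shiftR f k = f (k - 1) := rfl

lemma shiftR_pow_apply (f : ℤ →ᵇ ℂ) (j : ℕ) : ∀ k : ℤ, (shiftR ^ j) f k = f (k - j) := by
  induction j with
  | zero => intro k; simp
  | succ n ih =>
    intro k
    rw [pow_succ', ContinuousLinearMap.mul_apply, shiftR_apply]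
    rw [ih (k - 1)]
    congr 1
    push_cast
    ring

lemma icc_insert (a b : ℤ) (h : a ≤ b + 1) :
    Finset.Icc a (b + 1) = insert (b + 1) (Finset.Icc a b) := by
  ext x; simp only [Finset.mem_Icc, Finset.mem_insert]; omega

theorem stmt10 (x₀ : ℤ →ᵇ ℂ) (c : ℂ)
    (h : ∃ C : ℝ, ∀ n : ℕ, 1 ≤ n →
      ‖(n : ℂ)⁻¹ • ∑ j ∈ Finset.Icc 1 n, (shiftR ^ j) x₀ -
        BoundedContinuousFunction.const ℤ c‖ ≤ C / n) :
    x₀ - BoundedContinuousFunction.const ℤ c ∈ Set.range ((shiftR - 1 : (ℤ →ᵇ ℂ) →L[ℂ] ℤ →ᵇ ℂ) : (ℤ →ᵇ ℂ) → ℤ →ᵇ ℂ) := by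
  obtain ⟨C, hC⟩ := h
  -- C ≥ 0
  have hC0 : 0 ≤ C := by
    have := hC 1 le_rfl
    simp only [Nat.cast_one, div_one] at this
    exact le_trans (norm_nonneg _) this
  -- key: all interval sums of x₀ - c are bounded by C
  have key : ∀ a b : ℤ, a ≤ b → ‖∑ i ∈ Finset.Icc a b, (x₀ i - c)‖ ≤ C := by
    intro a b hab
    set n : ℕ := (b - a + 1).toNat with hn
    have hn1 : 1 ≤ n := by omega
    have hnz : (b : ℤ) - a + 1 = (n : ℤ) := by omega
    have h1 := hC n hn1
    -- evaluate at point b + 1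
    have h2 : ‖((n : ℂ)⁻¹ • ∑ j ∈ Finset.Icc 1 n, (shiftR ^ j) x₀ -
        BoundedContinuousFunction.const ℤ c) (b + 1)‖ ≤ C / n :=
      le_trans (BoundedContinuousFunction.norm_coe_le_norm _ _) h1
    have hcard : (Finset.Icc a b).card = n := by
      rw [Int.card_Icc]; omega
    have hsum : ∑ j ∈ Finset.Icc 1 n, x₀ ((b + 1) - (j : ℤ)) =
        ∑ i ∈ Finset.Icc a b, x₀ i := by
      apply Finset.sum_nbij' (i := fun j : ℕ => (b + 1) - (j : ℤ))
        (j := fun i : ℤ => (b + 1 - i).toNat)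
      · intro j hj; simp only [Finset.mem_Icc] at hj ⊢; omega
      · intro i hi; simp only [Finset.mem_Icc] at hi ⊢; omega
      · intro j hj; simp only [Finset.mem_Icc] at hj; omega
      · intro i hi; simp only [Finset.mem_Icc] at hi; omega
      · intro j hj; rfl
    have h3 : ((n : ℂ)⁻¹ • ∑ j ∈ Finset.Icc 1 n, (shiftR ^ j) x₀ -
        BoundedContinuousFunction.const ℤ c) (b + 1)
        = (n : ℂ)⁻¹ * (∑ i ∈ Finset.Icc a b, (x₀ i - c)) := by
      simp only [BoundedContinuousFunction.coe_sub, BoundedContinuousFunction.coe_smul,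
        Pi.sub_apply, Pi.smul_apply, BoundedContinuousFunction.const_apply,
        BoundedContinuousFunction.coe_sum, Finset.sum_apply]
      have : ∑ j ∈ Finset.Icc 1 n, ((shiftR ^ j) x₀) (b + 1) =
          ∑ i ∈ Finset.Icc a b, x₀ i := by
        rw [← hsum]
        exact Finset.sum_congr rfl fun j _ => shiftR_pow_apply x₀ j (b + 1)
      rw [this, Finset.sum_sub_distrib, Finset.sum_const, hcard]
      have hnne : (n : ℂ) ≠ 0 := Nat.cast_ne_zero.mpr (by omega)
      field_simp
      rw [smul_eq_mul, nsmul_eq_mul, mul_sub, ← mul_assoc, mul_one_div_cancel hnne, one_mul]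
    rw [h3] at h2
    have hnpos : (0 : ℝ) < n := by exact_mod_cast hn1
    rw [norm_mul, norm_inv] at h2
    have hnn : ‖(n : ℂ)‖ = (n : ℝ) := by
      simp [Complex.norm_natCast]
    rw [hnn] at h2
    calc ‖∑ i ∈ Finset.Icc a b, (x₀ i - c)‖
        = (n : ℝ) * ((n : ℝ)⁻¹ * ‖∑ i ∈ Finset.Icc a b, (x₀ i - c)‖) := by
          field_simp
      _ ≤ (n : ℝ) * (C / n) := by
          apply mul_le_mul_of_nonneg_left h2 (le_of_lt hnpos)
      _ = C := by field_simp
  -- define the cumulative-sum function g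
  set g : ℤ → ℂ := fun k =>
    if 0 ≤ k then ∑ i ∈ Finset.Icc 1 k, (x₀ i - c)
    else -∑ i ∈ Finset.Icc (k + 1) 0, (x₀ i - c) with hg
  have hgbound : ∀ k : ℤ, ‖g k‖ ≤ C := by
    intro k
    simp only [hg]
    split_ifs with hk
    · rcases eq_or_lt_of_le hk with h0 | h0
      · simp [← h0, hC0]
      · exact key 1 k h0
    · rw [norm_neg]
      exact key (k + 1) 0 (by omega)
  have hgrec : ∀ k : ℤ, g k - g (k - 1) = x₀ k - c := by
    intro k
    rcases lt_trichotomy k 0 with hk | hk | hk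
    · -- k ≤ -1 : both negative branch
      have h1 : ¬ (0 ≤ k) := by omega
      have h2 : ¬ (0 ≤ k - 1) := by omega
      simp only [hg, if_neg h1, if_neg h2]
      have : Finset.Icc (k - 1 + 1) 0 = insert k (Finset.Icc (k + 1) 0) := by
        ext x; simp only [Finset.mem_Icc, Finset.mem_insert]; omega
      rw [this, Finset.sum_insert (by simp only [Finset.mem_Icc]; omega)]
      ring
    · subst hk
      have h1 : (0 : ℤ) ≤ 0 := le_rfl
      have h2 : ¬ ((0 : ℤ) ≤ 0 - 1) := by omega
      simp only [hg, if_pos h1, if_neg h2]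
      have e1 : Finset.Icc (1 : ℤ) 0 = ∅ := by
        apply Finset.Icc_eq_empty; omega
      have e2 : Finset.Icc ((0 : ℤ) - 1 + 1) 0 = {(0 : ℤ)} := by
        ext x; simp only [Finset.mem_Icc, Finset.mem_singleton]; omega
      rw [e1, e2]
      simp
    · have h1 : (0 : ℤ) ≤ k := by omega
      have h2 : (0 : ℤ) ≤ k - 1 := by omega
      simp only [hg, if_pos h1, if_pos h2]
      have e1 : Finset.Icc (1 : ℤ) k = insert k (Finset.Icc 1 (k - 1)) := by
        ext x; simp only [Finset.mem_Icc, Finset.mem_insert]; omega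
      rw [e1, Finset.sum_insert (by simp only [Finset.mem_Icc]; omega)]
      ring
  -- the witness
  set u : ℤ →ᵇ ℂ := BoundedContinuousFunction.ofNormedAddCommGroup (fun k => -g k)
    continuous_of_discreteTopology C (fun k => by simpa using hgbound k) with hu
  refine ⟨u, ?_⟩
  ext k
  have : ((shiftR - 1 : (ℤ →ᵇ ℂ) →L[ℂ] ℤ →ᵇ ℂ) u) k = u (k - 1) - u k := by
    simp [ContinuousLinearMap.sub_apply, shiftR_apply]
  rw [this]
  simp only [hu, BoundedContinuousFunction.coe_ofNormedAddCommGroup]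
  have := hgrec k
  simp only [BoundedContinuousFunction.coe_sub, Pi.sub_apply,
    BoundedContinuousFunction.const_apply]
  linear_combination this
end

section
/- There exists a sequence x_0 ∈ ℓ∞(ℤ) whose Cesàro shift-averages do not converge uniformly: for the sequence consisting (for negative indices) of alternating blocks of 0's and 1's with rapidly increasing lengths (say block j has length 4^j) and 0's for nonnegative indices, the averages (1/n) Σ_{j=1}^n x_{k−j} do not converge uniformly in k ∈ ℤ as n → ∞. -/
/-- The sequence with `x k = 0` for `k ≥ 0` and, for `k < 0`, alternating blocks of `0`s and
`1`s where block `j` (counting leftwards from index `-1`) has length `4^j`: the entry at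
`k < 0` lies in block `j = Nat.log 4 (3 * m + 1)` where `m = -k - 1`, and equals `1` iff `j`
is odd. -/
noncomputable def badSeq : ℤ → ℂ := fun k =>
  if k < 0 ∧ Nat.log 4 (3 * (-k - 1).toNat + 1) % 2 = 1 then 1 else 0

/-- Left endpoint (in `m`-coordinates) of block `J`. -/
def aBlk (J : ℕ) : ℕ := (4 ^ J - 1) / 3

lemma three_aBlk (J : ℕ) : 3 * aBlk J + 1 = 4 ^ J := by
  induction J with
  | zero => rfl
  | succ J ih =>
    unfold aBlk at *
    have h4 : (4:ℕ) ^ (J+1) = 4 * 4 ^ J := by ring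
    omega

lemma log_blk (J i : ℕ) (hi : i < 4 ^ J) :
    Nat.log 4 (3 * (aBlk J + i) + 1) = J := by
  have h := three_aBlk J
  have hval : 3 * (aBlk J + i) + 1 = 4 ^ J + 3 * i := by omega
  rw [hval]
  refine Nat.log_eq_of_pow_le_of_lt_pow (by omega) ?_
  have : (4:ℕ) ^ (J+1) = 4 * 4 ^ J := by ring
  omega

lemma badSeq_eval (J j : ℕ) (hj1 : 1 ≤ j) (hj : j ≤ 4 ^ J) :
    badSeq (-(aBlk J : ℤ) - j) = if J % 2 = 1 then 1 else 0 := by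
  have hk : -(aBlk J : ℤ) - j < 0 := by
    have : (1:ℤ) ≤ (j:ℤ) := by exact_mod_cast hj1
    omega
  have hm : (-(-(aBlk J : ℤ) - j) - 1).toNat = aBlk J + (j - 1) := by omega
  have hlog : Nat.log 4 (3 * (aBlk J + (j - 1)) + 1) = J := log_blk J (j-1) (by omega)
  simp only [badSeq]
  rw [hm, hlog]
  by_cases hJ : J % 2 = 1 <;> simp [hk, hJ]

theorem stmt16 :
    ¬ ∃ c : ℂ, ∀ ε > (0 : ℝ), ∃ N : ℕ, ∀ n ≥ N, ∀ k : ℤ,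
      ‖(n : ℂ)⁻¹ * ∑ j ∈ Finset.Icc 1 n, badSeq (k - (j : ℤ)) - c‖ ≤ ε := by
  rintro ⟨c, hc⟩
  obtain ⟨N, hN⟩ := hc (1/4) (by norm_num)
  set n := max N 1 with hn
  have hn1 : 1 ≤ n := le_max_right _ _
  have hnN : N ≤ n := le_max_left _ _
  have hpow : ∀ J : ℕ, n ≤ J → n ≤ 4 ^ J := by
    intro J hJ
    calc n ≤ J := hJ
    _ ≤ 4 ^ J := Nat.le_of_lt (Nat.lt_pow_self (by norm_num : 1 < 4))
  -- even block: sum is 0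
  have h0 : ∀ J : ℕ, n ≤ 4 ^ J → J % 2 = 0 →
      ∑ j ∈ Finset.Icc 1 n, badSeq ((-(aBlk J : ℤ)) - (j : ℤ)) = 0 := by
    intro J hJ hpar
    refine Finset.sum_eq_zero fun j hj => ?_
    rw [Finset.mem_Icc] at hj
    rw [badSeq_eval J j hj.1 (le_trans hj.2 hJ)]
    simp [hpar]
  have h1 : ∀ J : ℕ, n ≤ 4 ^ J → J % 2 = 1 →
      ∑ j ∈ Finset.Icc 1 n, badSeq ((-(aBlk J : ℤ)) - (j : ℤ)) = n := by
    intro J hJ hpar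
    have hall : ∀ j ∈ Finset.Icc 1 n, badSeq ((-(aBlk J : ℤ)) - (j : ℤ)) = 1 := by
      intro j hj
      rw [Finset.mem_Icc] at hj
      rw [badSeq_eval J j hj.1 (le_trans hj.2 hJ)]
      simp [hpar]
    rw [Finset.sum_congr rfl hall, Finset.sum_const, Nat.card_Icc]
    simp
  have hne : (n : ℂ) ≠ 0 := Nat.cast_ne_zero.mpr (by omega)
  have e0 := hN n hnN (-(aBlk (2*n) : ℤ))
  have e1 := hN n hnN (-(aBlk (2*n+1) : ℤ))
  rw [h0 (2*n) (hpow _ (by omega)) (by omega)] at e0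
  rw [h1 (2*n+1) (hpow _ (by omega)) (by omega)] at e1
  rw [mul_zero, zero_sub, norm_neg] at e0
  rw [inv_mul_cancel₀ hne] at e1
  have : (1:ℝ) = ‖(1:ℂ)‖ := by simp
  have htri : ‖(1:ℂ)‖ ≤ ‖1 - c‖ + ‖c‖ := by
    calc ‖(1:ℂ)‖ = ‖(1 - c) + c‖ := by ring_nf
    _ ≤ ‖1 - c‖ + ‖c‖ := norm_add_le _ _
  rw [← this] at htri
  linarith
end
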